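/- arXiv:2104.12576 — 2 statements merged into one kernel-verified Lean document; each statement's English description precedes it below -/
import Mathlib

section
/- Let $A \in \mathbb{R}^{n \times m_1}$ and $B \in \mathbb{R}^{n \times m_2}$ be matrices, and suppose there exist constants $0 < c_* \leq c^*$ and $\omega \geq 0$ such that: (i) $n c_* \|u\|_2^2 \leq \|A u\|_2^2 \leq n c^* \|u\|_2^2$ for all $u \in \mathbb{R}^{m_1}$, (ii) $n c_* \|v\|_2^2 \leq \|B v\|_2^2 \leq n c^* \|v\|_2^2$ for all $v \in \mathbb{R}^{m_2}$, and (iii) $\|A^\top B v\|_2 \leq n\omega \|v\|_2$ for all $v$ and $\|B^\top A u\|_2 \leq n\omega\|u\|_2$ for all $u$. Let $H_B = B(B^\top B)^{-1}B^\top$ be the orthogonal projection onto the column space of $B$. Then for all $u \in \mathbb{R}^{m_1}$: $n(c_* - \omega^2/c_*)\|u\|_2 \leq \|A^\top(I_n - H_B)A u\|_2 \leq n(c^* + \omega^2/c_*)\|u\|_2$. -/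
open Matrix

noncomputable def enorm3 {m : ℕ} (v : Fin m → ℝ) : ℝ := Real.sqrt (v ⬝ᵥ v)

lemma dot_self_nonneg' {m : ℕ} (v : Fin m → ℝ) : 0 ≤ v ⬝ᵥ v :=
  Finset.sum_nonneg fun i _ => mul_self_nonneg _

lemma enorm3_nonneg {m : ℕ} (v : Fin m → ℝ) : 0 ≤ enorm3 v := Real.sqrt_nonneg _

lemma enorm3_sq {m : ℕ} (v : Fin m → ℝ) : enorm3 v ^ 2 = v ⬝ᵥ v :=
  Real.sq_sqrt (dot_self_nonneg' v)

lemma dot_self_pos {m : ℕ} {v : Fin m → ℝ} (hv : v ≠ 0) : 0 < v ⬝ᵥ v := by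
  rcases (dot_self_nonneg' v).lt_or_eq with h | h
  · exact h
  · exfalso; apply hv
    have := (Finset.sum_eq_zero_iff_of_nonneg
      (fun i _ => mul_self_nonneg (v i))).1 h.symm
    funext i
    have := this i (Finset.mem_univ i)
    exact mul_self_eq_zero.1 this

lemma enorm3_CS {m : ℕ} (v w : Fin m → ℝ) : v ⬝ᵥ w ≤ enorm3 v * enorm3 w := by
  have h := Finset.sum_mul_sq_le_sq_mul_sq Finset.univ v w
  have h2 : (v ⬝ᵥ w) ^ 2 ≤ (v ⬝ᵥ v) * (w ⬝ᵥ w) := by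
    simpa [dotProduct, pow_two] using h
  calc v ⬝ᵥ w ≤ |v ⬝ᵥ w| := le_abs_self _
    _ = Real.sqrt ((v ⬝ᵥ w) ^ 2) := (Real.sqrt_sq_eq_abs _).symm
    _ ≤ Real.sqrt ((v ⬝ᵥ v) * (w ⬝ᵥ w)) := Real.sqrt_le_sqrt h2
    _ = enorm3 v * enorm3 w := Real.sqrt_mul (dot_self_nonneg' v) _

lemma enorm3_sub_le {m : ℕ} (v w : Fin m → ℝ) :
    enorm3 (v - w) ≤ enorm3 v + enorm3 w := by
  have h1 : (v - w) ⬝ᵥ (v - w) = v ⬝ᵥ v - 2 * (v ⬝ᵥ w) + w ⬝ᵥ w := by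
    simp [sub_dotProduct, dotProduct_sub, dotProduct_comm w v]; ring
  have hcs := enorm3_CS v w
  have hcs' : -(v ⬝ᵥ w) ≤ enorm3 v * enorm3 w := by
    have h := enorm3_CS v (-w)
    have hw : enorm3 (-w) = enorm3 w := by
      unfold enorm3; rw [neg_dotProduct, dotProduct_neg, neg_neg]
    rw [dotProduct_neg, hw] at h
    linarith
  have h2 : (v - w) ⬝ᵥ (v - w) ≤ (enorm3 v + enorm3 w) ^ 2 := by
    have := enorm3_sq v; have := enorm3_sq w
    nlinarith
  calc enorm3 (v - w) = Real.sqrt ((v - w) ⬝ᵥ (v - w)) := rfl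
    _ ≤ Real.sqrt ((enorm3 v + enorm3 w) ^ 2) := Real.sqrt_le_sqrt h2
    _ = enorm3 v + enorm3 w :=
        Real.sqrt_sq (add_nonneg (enorm3_nonneg v) (enorm3_nonneg w))

lemma dot_mulVec_transpose {k l : ℕ} (M : Matrix (Fin k) (Fin l) ℝ)
    (x : Fin k → ℝ) (y : Fin l → ℝ) :
    x ⬝ᵥ (M *ᵥ y) = (Mᵀ *ᵥ x) ⬝ᵥ y := by
  rw [dotProduct_mulVec, mulVec_transpose]

/-- Lemma 4 (first part): two-sided spectral bounds for `Aᵀ(I - H_B)A`. -/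
theorem hat_matrix_spectrum_bounds {n m1 m2 : ℕ}
    (A : Matrix (Fin n) (Fin m1) ℝ) (B : Matrix (Fin n) (Fin m2) ℝ)
    (cs cS ω : ℝ) (hcs : 0 < cs) (hle : cs ≤ cS) (hω : 0 ≤ ω)
    (hA : ∀ u : Fin m1 → ℝ,
      (n : ℝ) * cs * (u ⬝ᵥ u) ≤ (A *ᵥ u) ⬝ᵥ (A *ᵥ u) ∧
      (A *ᵥ u) ⬝ᵥ (A *ᵥ u) ≤ (n : ℝ) * cS * (u ⬝ᵥ u))
    (hB : ∀ v : Fin m2 → ℝ,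
      (n : ℝ) * cs * (v ⬝ᵥ v) ≤ (B *ᵥ v) ⬝ᵥ (B *ᵥ v) ∧
      (B *ᵥ v) ⬝ᵥ (B *ᵥ v) ≤ (n : ℝ) * cS * (v ⬝ᵥ v))
    (hAB : ∀ v : Fin m2 → ℝ, enorm3 ((Aᵀ * B) *ᵥ v) ≤ (n : ℝ) * ω * enorm3 v)
    (hBA : ∀ u : Fin m1 → ℝ, enorm3 ((Bᵀ * A) *ᵥ u) ≤ (n : ℝ) * ω * enorm3 u)
    (HB : Matrix (Fin n) (Fin n) ℝ) (hHB : HB = B * (Bᵀ * B)⁻¹ * Bᵀ) :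
    ∀ u : Fin m1 → ℝ,
      (n : ℝ) * (cs - ω ^ 2 / cs) * enorm3 u ≤ enorm3 ((Aᵀ * (1 - HB) * A) *ᵥ u) ∧
      enorm3 ((Aᵀ * (1 - HB) * A) *ᵥ u) ≤ (n : ℝ) * (cS + ω ^ 2 / cs) * enorm3 u := by
  intro u
  rcases Nat.eq_zero_or_pos n with hn | hn
  · subst hn
    have hM : Aᵀ * (1 - HB) * A = 0 := by
      ext i j
      simp [Matrix.mul_apply]
    rw [hM]
    simp [enorm3]
  -- main case : n > 0
  set nr : ℝ := (n : ℝ) with hnrdef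
  have hnr : 0 < nr := by rw [hnrdef]; exact_mod_cast hn
  set G : Matrix (Fin m2) (Fin m2) ℝ := Bᵀ * B with hGdef
  -- G is positive definite
  have hGpd : G.PosDef := by
    rw [Matrix.posDef_iff_dotProduct_mulVec]
    constructor
    · show Gᴴ = G
      ext i j
      simp [hGdef, Matrix.conjTranspose_apply, Matrix.mul_apply, mul_comm]
    · intro x hx
      have hxx : 0 < x ⬝ᵥ x := dot_self_pos hx
      have hq : x ⬝ᵥ (G *ᵥ x) = (B *ᵥ x) ⬝ᵥ (B *ᵥ x) := by
        rw [hGdef, ← mulVec_mulVec, dot_mulVec_transpose Bᵀ x (B *ᵥ x),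
          Matrix.transpose_transpose]
      have := (hB x).1
      have hstar : star x = x := by simp
      rw [hstar, hq]
      nlinarith [mul_pos (mul_pos hnr hcs) hxx]
  have hGunit : IsUnit G.det := (Matrix.isUnit_iff_isUnit_det G).1 hGpd.isUnit
  have hGG : G * G⁻¹ = 1 := Matrix.mul_nonsing_inv G hGunit
  -- bound for the inverse
  have hinv : ∀ y : Fin m2 → ℝ, enorm3 (G⁻¹ *ᵥ y) ≤ enorm3 y / (nr * cs) := by
    intro y
    set z := G⁻¹ *ᵥ y with hzdef
    have hGz : G *ᵥ z = y := by
      rw [hzdef, mulVec_mulVec, hGG, one_mulVec]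
    have h1 : nr * cs * (z ⬝ᵥ z) ≤ z ⬝ᵥ y := by
      have hq : z ⬝ᵥ (G *ᵥ z) = (B *ᵥ z) ⬝ᵥ (B *ᵥ z) := by
        rw [hGdef, ← mulVec_mulVec, dot_mulVec_transpose Bᵀ z (B *ᵥ z),
          Matrix.transpose_transpose]
      have := (hB z).1
      rw [← hGz, hq]
      exact this
    have h2 : z ⬝ᵥ y ≤ enorm3 z * enorm3 y := enorm3_CS z y
    have hz2 : z ⬝ᵥ z = enorm3 z ^ 2 := (enorm3_sq z).symm
    rw [le_div_iff₀ (mul_pos hnr hcs)]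
    rcases (enorm3_nonneg z).lt_or_eq with hz | hz
    · nlinarith [hz, h1, h2, hz2, mul_pos hnr hcs]
    · rw [← hz, zero_mul]
      exact enorm3_nonneg y
  -- operator norm bound for Aᵀ
  have hAu : ∀ w : Fin m1 → ℝ, enorm3 (A *ᵥ w) ≤ Real.sqrt (nr * cS) * enorm3 w := by
    intro w
    have h := (hA w).2
    have : enorm3 (A *ᵥ w) ≤ Real.sqrt (nr * cS * (w ⬝ᵥ w)) := Real.sqrt_le_sqrt h
    rwa [Real.sqrt_mul (mul_nonneg hnr.le (hcs.trans_le hle).le)] at this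
  have hAT : ∀ w : Fin n → ℝ, enorm3 (Aᵀ *ᵥ w) ≤ Real.sqrt (nr * cS) * enorm3 w := by
    intro w
    set t := enorm3 (Aᵀ *ᵥ w) with htdef
    have ht2 : t ^ 2 = w ⬝ᵥ (A *ᵥ (Aᵀ *ᵥ w)) := by
      rw [htdef, enorm3_sq, dot_mulVec_transpose A w (Aᵀ *ᵥ w)]
    have hb : w ⬝ᵥ (A *ᵥ (Aᵀ *ᵥ w)) ≤ enorm3 w * (Real.sqrt (nr * cS) * t) := by
      calc w ⬝ᵥ (A *ᵥ (Aᵀ *ᵥ w)) ≤ enorm3 w * enorm3 (A *ᵥ (Aᵀ *ᵥ w)) :=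
            enorm3_CS w _
        _ ≤ enorm3 w * (Real.sqrt (nr * cS) * t) := by
            have := hAu (Aᵀ *ᵥ w)
            exact mul_le_mul_of_nonneg_left this (enorm3_nonneg w)
    rcases (enorm3_nonneg (Aᵀ *ᵥ w)).lt_or_eq with ht | ht
    · rw [← htdef] at ht
      nlinarith [ht, ht2, hb, enorm3_nonneg w, Real.sqrt_nonneg (nr * cS)]
    · rw [htdef, ← ht]
      exact mul_nonneg (Real.sqrt_nonneg _) (enorm3_nonneg w)
  -- now the main estimates
  set y : Fin m2 → ℝ := Bᵀ *ᵥ (A *ᵥ u) with hydef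
  set z : Fin m2 → ℝ := G⁻¹ *ᵥ y with hzdef
  have hynorm : enorm3 y ≤ nr * ω * enorm3 u := by
    rw [hydef, mulVec_mulVec]
    exact hBA u
  have hznorm : enorm3 z ≤ ω * enorm3 u / cs := by
    calc enorm3 z ≤ enorm3 y / (nr * cs) := hinv y
      _ ≤ (nr * ω * enorm3 u) / (nr * cs) :=
          (div_le_div_iff_of_pos_right (mul_pos hnr hcs)).mpr hynorm
      _ = ω * enorm3 u / cs := by
          rw [mul_assoc, mul_div_mul_left _ _ hnr.ne']
  have hMu : (Aᵀ * (1 - HB) * A) *ᵥ u = Aᵀ *ᵥ ((A *ᵥ u) - B *ᵥ z) := by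
    rw [hHB, ← mulVec_mulVec, ← mulVec_mulVec, Matrix.sub_mulVec, Matrix.one_mulVec]
    congr 1
    rw [hzdef, hydef, ← mulVec_mulVec, ← mulVec_mulVec]
  constructor
  · -- lower bound
    set q := u ⬝ᵥ ((Aᵀ * (1 - HB) * A) *ᵥ u) with hqdef
    have hq1 : q = (A *ᵥ u) ⬝ᵥ (A *ᵥ u) - y ⬝ᵥ z := by
      rw [hqdef, hMu, dot_mulVec_transpose Aᵀ u _, Matrix.transpose_transpose,
        dotProduct_sub]
      congr 1
      rw [dot_mulVec_transpose B (A *ᵥ u) z, ← hydef]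
    have hyz : y ⬝ᵥ z ≤ nr * (ω ^ 2 / cs) * enorm3 u ^ 2 := by
      calc y ⬝ᵥ z ≤ enorm3 y * enorm3 z := enorm3_CS y z
        _ ≤ (nr * ω * enorm3 u) * (ω * enorm3 u / cs) :=
            mul_le_mul hynorm hznorm (enorm3_nonneg z)
              (mul_nonneg (mul_nonneg hnr.le hω) (enorm3_nonneg u))
        _ = nr * (ω ^ 2 / cs) * enorm3 u ^ 2 := by
            field_simp
    have hlow : nr * (cs - ω ^ 2 / cs) * enorm3 u ^ 2 ≤ q := by
      have h1 := (hA u).1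
      rw [hq1]
      have hu2 : u ⬝ᵥ u = enorm3 u ^ 2 := (enorm3_sq u).symm
      rw [hu2] at h1
      nlinarith
    have hcsq : q ≤ enorm3 u * enorm3 ((Aᵀ * (1 - HB) * A) *ᵥ u) := enorm3_CS u _
    rcases (enorm3_nonneg u).lt_or_eq with hu | hu
    · nlinarith
    · rw [← hu, mul_zero]
      exact enorm3_nonneg _
  · -- upper bound
    have hsplit : (Aᵀ * (1 - HB) * A) *ᵥ u = (Aᵀ *ᵥ (A *ᵥ u)) - ((Aᵀ * B) *ᵥ z) := by
      rw [hMu, Matrix.mulVec_sub, mulVec_mulVec, mulVec_mulVec]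
    have h1 : enorm3 (Aᵀ *ᵥ (A *ᵥ u)) ≤ nr * cS * enorm3 u := by
      calc enorm3 (Aᵀ *ᵥ (A *ᵥ u)) ≤ Real.sqrt (nr * cS) * enorm3 (A *ᵥ u) :=
            hAT (A *ᵥ u)
        _ ≤ Real.sqrt (nr * cS) * (Real.sqrt (nr * cS) * enorm3 u) := by
            exact mul_le_mul_of_nonneg_left (hAu u) (Real.sqrt_nonneg _)
        _ = nr * cS * enorm3 u := by
            rw [← mul_assoc, Real.mul_self_sqrt (mul_nonneg hnr.le (hcs.trans_le hle).le)]
    have h2 : enorm3 ((Aᵀ * B) *ᵥ z) ≤ nr * (ω ^ 2 / cs) * enorm3 u := by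
      calc enorm3 ((Aᵀ * B) *ᵥ z) ≤ nr * ω * enorm3 z := hAB z
        _ ≤ nr * ω * (ω * enorm3 u / cs) :=
            mul_le_mul_of_nonneg_left hznorm (mul_nonneg hnr.le hω)
        _ = nr * (ω ^ 2 / cs) * enorm3 u := by
            field_simp
    calc enorm3 ((Aᵀ * (1 - HB) * A) *ᵥ u)
        ≤ enorm3 (Aᵀ *ᵥ (A *ᵥ u)) + enorm3 ((Aᵀ * B) *ᵥ z) := by
          rw [hsplit]; exact enorm3_sub_le _ _
      _ ≤ nr * cS * enorm3 u + nr * (ω ^ 2 / cs) * enorm3 u := add_le_add h1 h2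
      _ = nr * (cS + ω ^ 2 / cs) * enorm3 u := by ring
end

section
/- Under the assumptions of the previous statement (spectrum bounds $c_*, c^*$ for $A$ and $B$, cross bound $\omega$, with $c_* - \omega^2/c_* > 0$), the matrix $M = A^\top(I_n - H_B)A$ is invertible, and for all $u \in \mathbb{R}^{m_1}$: $\frac{\|u\|_2}{n(c^* + \omega^2/c_*)} \leq \|M^{-1} u\|_2 \leq \frac{\|u\|_2}{n(c_* - \omega^2/c_*)}$. -/
open Matrix

noncomputable def enorm4 {m : ℕ} (v : Fin m → ℝ) : ℝ := Real.sqrt (v ⬝ᵥ v)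

noncomputable def E4 {m : ℕ} (v : Fin m → ℝ) : EuclideanSpace ℝ (Fin m) :=
  (WithLp.equiv 2 _).symm v

lemma inner_E4 {m : ℕ} (u v : Fin m → ℝ) : (inner ℝ (E4 u) (E4 v) : ℝ) = u ⬝ᵥ v := by
  simp [E4, EuclideanSpace.inner_eq_star_dotProduct, dotProduct, mul_comm]

lemma enorm4_eq {m : ℕ} (v : Fin m → ℝ) : enorm4 v = ‖E4 v‖ := by
  rw [enorm4, ← inner_E4, real_inner_self_eq_norm_sq, Real.sqrt_sq (norm_nonneg _)]

lemma enorm4_nonneg {m : ℕ} (v : Fin m → ℝ) : 0 ≤ enorm4 v := Real.sqrt_nonneg _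

lemma enorm4_sq {m : ℕ} (v : Fin m → ℝ) : enorm4 v ^ 2 = v ⬝ᵥ v := by
  rw [enorm4_eq, ← inner_E4, real_inner_self_eq_norm_sq]

lemma dot_le_enorm4 {m : ℕ} (u v : Fin m → ℝ) : u ⬝ᵥ v ≤ enorm4 u * enorm4 v := by
  rw [enorm4_eq, enorm4_eq, ← inner_E4]; exact real_inner_le_norm _ _

lemma enorm4_sub_le {m : ℕ} (u v : Fin m → ℝ) :
    enorm4 (u - v) ≤ enorm4 u + enorm4 v := by
  rw [enorm4_eq, enorm4_eq, enorm4_eq]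
  have : E4 (u - v) = E4 u - E4 v := rfl
  rw [this]; exact norm_sub_le _ _

lemma enorm4_eq_zero {m : ℕ} (v : Fin m → ℝ) (h : enorm4 v = 0) : v = 0 := by
  have := enorm4_sq v
  rw [h] at this
  have h2 : E4 v = 0 := by
    rw [enorm4_eq] at h
    exact norm_eq_zero.mp h
  exact congrArg (WithLp.equiv 2 _) h2

lemma opnorm_of_sq {k m : ℕ} (C : Matrix (Fin k) (Fin m) ℝ) (c : ℝ) (hc : 0 ≤ c)
    (h : ∀ u, (C *ᵥ u) ⬝ᵥ (C *ᵥ u) ≤ c ^ 2 * (u ⬝ᵥ u)) (u : Fin m → ℝ) :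
    enorm4 (C *ᵥ u) ≤ c * enorm4 u := by
  rw [enorm4, enorm4]
  calc Real.sqrt ((C *ᵥ u) ⬝ᵥ (C *ᵥ u)) ≤ Real.sqrt (c ^ 2 * (u ⬝ᵥ u)) :=
        Real.sqrt_le_sqrt (h u)
    _ = c * Real.sqrt (u ⬝ᵥ u) := by
        rw [Real.sqrt_mul (by positivity), Real.sqrt_sq hc]

lemma mulVec_norm_lower {m : ℕ} (M : Matrix (Fin m) (Fin m) ℝ) (α : ℝ) (hα : 0 ≤ α)
    (h : ∀ u, α * (u ⬝ᵥ u) ≤ u ⬝ᵥ (M *ᵥ u)) (u : Fin m → ℝ) :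
    α * enorm4 u ≤ enorm4 (M *ᵥ u) := by
  rcases eq_or_lt_of_le (enorm4_nonneg u) with h0 | h0
  · rw [← h0, mul_zero]; exact enorm4_nonneg _
  · have h1 : α * (u ⬝ᵥ u) ≤ u ⬝ᵥ (M *ᵥ u) := h u
    have h2 : u ⬝ᵥ (M *ᵥ u) ≤ enorm4 u * enorm4 (M *ᵥ u) := dot_le_enorm4 _ _
    have h3 : enorm4 u ^ 2 = u ⬝ᵥ u := enorm4_sq u
    nlinarith [enorm4_nonneg (M *ᵥ u)]

lemma transpose_opnorm {k m : ℕ} (C : Matrix (Fin k) (Fin m) ℝ) (c : ℝ) (hc : 0 ≤ c)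
    (h : ∀ u, enorm4 (C *ᵥ u) ≤ c * enorm4 u) (x : Fin k → ℝ) :
    enorm4 (Cᵀ *ᵥ x) ≤ c * enorm4 x := by
  set w := Cᵀ *ᵥ x with hw
  rcases eq_or_lt_of_le (enorm4_nonneg w) with h0 | h0
  · rw [← h0]; exact mul_nonneg hc (enorm4_nonneg x)
  · have hd : w ⬝ᵥ w = x ⬝ᵥ (C *ᵥ w) := by
      rw [dotProduct_mulVec, ← mulVec_transpose, dotProduct_comm, transpose_transpose]
    have h1 : x ⬝ᵥ (C *ᵥ w) ≤ enorm4 x * enorm4 (C *ᵥ w) := dot_le_enorm4 _ _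
    have h2 : enorm4 (C *ᵥ w) ≤ c * enorm4 w := h w
    have h3 : enorm4 w ^ 2 = w ⬝ᵥ w := enorm4_sq w
    nlinarith [enorm4_nonneg x]

lemma inv_bound {m : ℕ} (S : Matrix (Fin m) (Fin m) ℝ) (α : ℝ) (hα : 0 < α)
    (h : ∀ u, α * enorm4 u ≤ enorm4 (S *ᵥ u)) :
    S.det ≠ 0 ∧ ∀ v, enorm4 (S⁻¹ *ᵥ v) ≤ enorm4 v / α := by
  have hdet : S.det ≠ 0 := by
    intro hd
    obtain ⟨v, hv0, hv⟩ := (Matrix.exists_mulVec_eq_zero_iff).mpr hd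
    have h1 := h v
    rw [hv] at h1
    have h2 : enorm4 (0 : Fin m → ℝ) = 0 := by simp [enorm4]
    rw [h2] at h1
    have h3 : enorm4 v = 0 := le_antisymm (by nlinarith [enorm4_nonneg v]) (enorm4_nonneg v)
    exact hv0 (enorm4_eq_zero v h3)
  refine ⟨hdet, fun v => ?_⟩
  have hSv : S *ᵥ (S⁻¹ *ᵥ v) = v := by
    rw [mulVec_mulVec, Matrix.mul_nonsing_inv _ (isUnit_iff_ne_zero.mpr hdet), one_mulVec]
  have h1 := h (S⁻¹ *ᵥ v)
  rw [hSv] at h1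
  rw [le_div_iff₀ hα]
  linarith [h1]


/-- Lemma 4 (second part): `M = Aᵀ(I - H_B)A` is invertible and `M⁻¹` satisfies
the reciprocal spectral bounds. -/
theorem hat_matrix_inverse_spectrum_bounds {n m1 m2 : ℕ} (hn : 0 < n)
    (A : Matrix (Fin n) (Fin m1) ℝ) (B : Matrix (Fin n) (Fin m2) ℝ)
    (cs cS ω : ℝ) (hcs : 0 < cs) (hle : cs ≤ cS) (hω : 0 ≤ ω)
    (hgap : 0 < cs - ω ^ 2 / cs)
    (hA : ∀ u : Fin m1 → ℝ,
      (n : ℝ) * cs * (u ⬝ᵥ u) ≤ (A *ᵥ u) ⬝ᵥ (A *ᵥ u) ∧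
      (A *ᵥ u) ⬝ᵥ (A *ᵥ u) ≤ (n : ℝ) * cS * (u ⬝ᵥ u))
    (hB : ∀ v : Fin m2 → ℝ,
      (n : ℝ) * cs * (v ⬝ᵥ v) ≤ (B *ᵥ v) ⬝ᵥ (B *ᵥ v) ∧
      (B *ᵥ v) ⬝ᵥ (B *ᵥ v) ≤ (n : ℝ) * cS * (v ⬝ᵥ v))
    (hAB : ∀ v : Fin m2 → ℝ, enorm4 ((Aᵀ * B) *ᵥ v) ≤ (n : ℝ) * ω * enorm4 v)
    (hBA : ∀ u : Fin m1 → ℝ, enorm4 ((Bᵀ * A) *ᵥ u) ≤ (n : ℝ) * ω * enorm4 u)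
    (HB : Matrix (Fin n) (Fin n) ℝ) (hHB : HB = B * (Bᵀ * B)⁻¹ * Bᵀ)
    (M : Matrix (Fin m1) (Fin m1) ℝ) (hM : M = Aᵀ * (1 - HB) * A) :
    IsUnit M ∧
    ∀ u : Fin m1 → ℝ,
      enorm4 u / ((n : ℝ) * (cS + ω ^ 2 / cs)) ≤ enorm4 (M⁻¹ *ᵥ u) ∧
      enorm4 (M⁻¹ *ᵥ u) ≤ enorm4 u / ((n : ℝ) * (cs - ω ^ 2 / cs)) := by
  have hn' : (0:ℝ) < n := by exact_mod_cast hn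
  have hcS : 0 < cS := lt_of_lt_of_le hcs hle
  set β := (n : ℝ) * (cS + ω ^ 2 / cs) with hβ
  set α := (n : ℝ) * (cs - ω ^ 2 / cs) with hα
  have hβ0 : 0 < β := by
    apply mul_pos hn'
    positivity
  have hα0 : 0 < α := mul_pos hn' hgap
  -- Bᵀ B quadratic bound and inverse bound
  have hSq : ∀ w : Fin m2 → ℝ, (n:ℝ) * cs * (w ⬝ᵥ w) ≤ w ⬝ᵥ ((Bᵀ * B) *ᵥ w) := by
    intro w
    rw [← mulVec_mulVec, dotProduct_mulVec, vecMul_transpose]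
    exact (hB w).1
  have hSl := mulVec_norm_lower (Bᵀ * B) ((n:ℝ)*cs) (by positivity) hSq
  obtain ⟨hdetS, hSinv⟩ := inv_bound (Bᵀ * B) ((n:ℝ)*cs) (by positivity) hSl
  -- operator bounds for A and Aᵀ
  have hAop : ∀ u : Fin m1 → ℝ, enorm4 (A *ᵥ u) ≤ Real.sqrt ((n:ℝ)*cS) * enorm4 u := by
    apply opnorm_of_sq A _ (Real.sqrt_nonneg _)
    intro u
    rw [Real.sq_sqrt (by positivity)]
    exact (hA u).2
  have hAt : ∀ x : Fin n → ℝ, enorm4 (Aᵀ *ᵥ x) ≤ Real.sqrt ((n:ℝ)*cS) * enorm4 x :=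
    transpose_opnorm A _ (Real.sqrt_nonneg _) hAop
  -- key decomposition
  have key : ∀ u : Fin m1 → ℝ,
      M *ᵥ u = (Aᵀ * A) *ᵥ u - (Aᵀ * B) *ᵥ ((Bᵀ * B)⁻¹ *ᵥ ((Bᵀ * A) *ᵥ u)) := by
    intro u
    rw [hM, hHB, Matrix.mul_sub, Matrix.mul_one, Matrix.sub_mul, sub_mulVec]
    congr 1
    rw [mulVec_mulVec, mulVec_mulVec]
    congr 1
    simp [Matrix.mul_assoc]
  -- upper operator bound for M
  have hMop : ∀ u : Fin m1 → ℝ, enorm4 (M *ᵥ u) ≤ β * enorm4 u := by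
    intro u
    set y := (Bᵀ * A) *ᵥ u with hy
    set z := (Bᵀ * B)⁻¹ *ᵥ y with hz
    have t1 : enorm4 ((Aᵀ * A) *ᵥ u) ≤ (n:ℝ) * cS * enorm4 u := by
      rw [← mulVec_mulVec]
      calc enorm4 (Aᵀ *ᵥ (A *ᵥ u)) ≤ Real.sqrt ((n:ℝ)*cS) * enorm4 (A *ᵥ u) := hAt _
        _ ≤ Real.sqrt ((n:ℝ)*cS) * (Real.sqrt ((n:ℝ)*cS) * enorm4 u) := by
            exact mul_le_mul_of_nonneg_left (hAop u) (Real.sqrt_nonneg _)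
        _ = (n:ℝ) * cS * enorm4 u := by
            rw [← mul_assoc, Real.mul_self_sqrt (by positivity)]
    have t2 : enorm4 ((Aᵀ * B) *ᵥ z) ≤ (n:ℝ) * (ω^2/cs) * enorm4 u := by
      calc enorm4 ((Aᵀ * B) *ᵥ z) ≤ (n:ℝ) * ω * enorm4 z := hAB z
        _ ≤ (n:ℝ) * ω * (enorm4 y / ((n:ℝ)*cs)) := by
            exact mul_le_mul_of_nonneg_left (hSinv y) (by positivity)
        _ ≤ (n:ℝ) * ω * (((n:ℝ) * ω * enorm4 u) / ((n:ℝ)*cs)) := by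
            apply mul_le_mul_of_nonneg_left _ (by positivity)
            exact div_le_div_of_nonneg_right (hBA u) (by positivity)
        _ = (n:ℝ) * (ω^2/cs) * enorm4 u := by
            field_simp
    calc enorm4 (M *ᵥ u) ≤ enorm4 ((Aᵀ * A) *ᵥ u) + enorm4 ((Aᵀ * B) *ᵥ z) := by
          rw [key u]; exact enorm4_sub_le _ _
      _ ≤ (n:ℝ) * cS * enorm4 u + (n:ℝ) * (ω^2/cs) * enorm4 u := add_le_add t1 t2
      _ = β * enorm4 u := by rw [hβ]; ring
  -- lower quadratic bound for M
  have hqf : ∀ u : Fin m1 → ℝ, α * (u ⬝ᵥ u) ≤ u ⬝ᵥ (M *ᵥ u) := by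
    intro u
    set y := (Bᵀ * A) *ᵥ u with hy
    set z := (Bᵀ * B)⁻¹ *ᵥ y with hz
    have e0 : u ⬝ᵥ (M *ᵥ u) = (A *ᵥ u) ⬝ᵥ (A *ᵥ u) - y ⬝ᵥ z := by
      rw [key u, dotProduct_sub]
      congr 1
      · rw [← mulVec_mulVec, dotProduct_mulVec, vecMul_transpose]
      · rw [dotProduct_mulVec, ← mulVec_transpose, transpose_mul, transpose_transpose]
    have e1 : enorm4 y ≤ (n:ℝ) * ω * enorm4 u := hBA u
    have e2 : (n:ℝ) * cs * enorm4 z ≤ enorm4 y := by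
      have := hSinv y
      rw [le_div_iff₀ (by positivity)] at this
      linarith
    have e3 : y ⬝ᵥ z ≤ enorm4 y * enorm4 z := dot_le_enorm4 _ _
    have e4 : enorm4 u ^ 2 = u ⬝ᵥ u := enorm4_sq u
    have e5 : 0 ≤ enorm4 z := enorm4_nonneg z
    have e6 : 0 ≤ enorm4 y := enorm4_nonneg y
    have e7 : 0 ≤ enorm4 u := enorm4_nonneg u
    have hyz : (n:ℝ) * cs * (y ⬝ᵥ z) ≤ (n:ℝ)^2 * ω^2 * (u ⬝ᵥ u) := by
      have h4 : ((n:ℝ) * ω * enorm4 u) * ((n:ℝ) * ω * enorm4 u)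
          = (n:ℝ) ^ 2 * ω ^ 2 * (u ⬝ᵥ u) := by rw [← e4]; ring
      nlinarith [h4, mul_le_mul_of_nonneg_left e3 (show (0:ℝ) ≤ (n:ℝ)*cs by positivity),
        mul_le_mul_of_nonneg_left e2 e6, mul_self_le_mul_self e6 e1, e4,
        mul_pos hn' hcs]
    have hyz2 : y ⬝ᵥ z ≤ (n:ℝ) * (ω^2/cs) * (u ⬝ᵥ u) := by
      rw [show (n:ℝ)*(ω^2/cs)*(u ⬝ᵥ u) = ((n:ℝ)^2*ω^2*(u ⬝ᵥ u))/((n:ℝ)*cs) by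
        field_simp, le_div_iff₀ (by positivity)]
      linarith [hyz]
    have e8 := (hA u).1
    rw [e0]
    have hαe : α = (n:ℝ)*cs - (n:ℝ)*(ω^2/cs) := by rw [hα]; ring
    rw [hαe, sub_mul]
    linarith [hyz2, e8]
  have hql := mulVec_norm_lower M α hα0.le hqf
  obtain ⟨hdetM, hMinv⟩ := inv_bound M α hα0 hql
  have hUnit : IsUnit M := (Matrix.isUnit_iff_isUnit_det M).mpr (isUnit_iff_ne_zero.mpr hdetM)
  refine ⟨hUnit, fun u => ⟨?_, hMinv u⟩⟩
  -- lower bound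
  have hMv : M *ᵥ (M⁻¹ *ᵥ u) = u := by
    rw [mulVec_mulVec, Matrix.mul_nonsing_inv _ (isUnit_iff_ne_zero.mpr hdetM), one_mulVec]
  have := hMop (M⁻¹ *ᵥ u)
  rw [hMv] at this
  rw [div_le_iff₀ hβ0]
  linarith
end
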